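/- Let X be a set of feasible routing solutions and B a budget. Let (s₁,t₁,d₁,f₁) and (s₂,t₂,d₂,f₂) be two tuples such that, for i = 1,2: 0 ≤ sᵢ ≤ 1, tᵢ ≥ 0, (dᵢ,fᵢ) ∈ X is lower-level optimal for (sᵢ,tᵢ), and sᵢ·fᵢ − tᵢ·dᵢ = B. If t₁ < t₂, then d₁ ≥ d₂; that is, for a given budget the driven distance is non-increasing in the tax level. -/
import Mathlib


/-- Proposition 2: For a given budget `B` and two feasible
policy–solution tuples with `0 ≤ sᵢ ≤ 1`, `tᵢ ≥ 0`, lower-level optimality,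
and budget constraints `sᵢ·fᵢ − tᵢ·dᵢ = B`, if `t₁ < t₂` then `d₁ ≥ d₂`:
the driven distance is non-increasing in the tax level. -/
theorem stmt4 (X : Set (ℝ × ℝ)) (hX : X.Nonempty)
    (hXnn : ∀ p ∈ X, 0 ≤ p.1 ∧ 0 ≤ p.2)
    (B : ℝ)
    (s₁ t₁ d₁ f₁ s₂ t₂ d₂ f₂ : ℝ)
    (hs₁ : 0 ≤ s₁) (hs₁' : s₁ ≤ 1) (ht₁ : 0 ≤ t₁)
    (hs₂ : 0 ≤ s₂) (hs₂' : s₂ ≤ 1) (ht₂ : 0 ≤ t₂)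
    (hmem₁ : (d₁, f₁) ∈ X)
    (hopt₁ : ∀ p ∈ X,
      (1 + t₁) * d₁ + (1 - s₁) * f₁ ≤ (1 + t₁) * p.1 + (1 - s₁) * p.2)
    (hB₁ : s₁ * f₁ - t₁ * d₁ = B)
    (hmem₂ : (d₂, f₂) ∈ X)
    (hopt₂ : ∀ p ∈ X,
      (1 + t₂) * d₂ + (1 - s₂) * f₂ ≤ (1 + t₂) * p.1 + (1 - s₂) * p.2)
    (hB₂ : s₂ * f₂ - t₂ * d₂ = B)
    (ht : t₁ < t₂) :
    d₁ ≥ d₂ := by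
  by_contra hcon
  push_neg at hcon
  obtain ⟨hd₁, hf₁⟩ := hXnn _ hmem₁
  obtain ⟨hd₂, hf₂⟩ := hXnn _ hmem₂
  have h1 := hopt₁ (d₂, f₂) hmem₂
  have h2 := hopt₂ (d₁, f₁) hmem₁
  simp only [Prod.fst, Prod.snd] at h1 h2
  -- from opt2: (1+t₂)(d₂-d₁) ≤ (1-s₂)(f₁-f₂), d₂ > d₁ ⇒ f₁ > f₂ and s₂ < 1
  have hΔd : 0 < d₂ - d₁ := by linarith
  have hΔf : 0 < f₁ - f₂ := by nlinarith
  -- (1+t₂)(1-s₁) ≤ (1+t₁)(1-s₂) ⇒ s₂ < s₁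
  have hs : s₂ < s₁ := by nlinarith [mul_pos hΔd hΔf]
  -- budget: s₂f₂ = s₁f₁ + t₂d₂ - t₁d₁ > s₁f₁, but s₂f₂ ≤ s₁f₁
  nlinarith [mul_nonneg ht₁ hd₁, mul_pos (lt_of_le_of_lt ht₁ ht) (lt_of_le_of_lt hd₁ hcon)]
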